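/- Let C ⊆ L⁰ be nonempty and satisfy the countable concatenation property. The following are equivalent: (1) C is conditionally evenly convex; (2) for every x ∈ L⁰ with x ∉ C there exists x′ ∈ L⁰ such that ξ·x′ < x·x′ a.e. on H_{C,x} for all ξ ∈ C, where H_{C,x} is the largest 𝒢-measurable set on which x is locally separated from C. -/

import Mathlib

open MeasureTheory

variable {Ω : Type*} [MeasurableSpace Ω]

/-- The countable concatenation property (CSet): for every countable measurable partition
`{A n}` of `Ω` and every sequence `{x n} ⊆ C`, the concatenation `∑ n, 1_{A n} • x n`
(i.e. the element `z ∈ L⁰` agreeing a.e. with `x n` on each `A n`) belongs to `C`. -/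
def CSet (μ : Measure Ω) (C : Set (Ω →ₘ[μ] ℝ)) : Prop :=
  ∀ A : ℕ → Set Ω, (∀ n, MeasurableSet (A n)) → Pairwise (Function.onFun Disjoint A) →
    (⋃ n, A n) = Set.univ →
    ∀ x : ℕ → Ω →ₘ[μ] ℝ, (∀ n, x n ∈ C) →
      ∀ z : Ω →ₘ[μ] ℝ, (∀ n, ∀ᵐ ω ∂μ, ω ∈ A n → z ω = x n ω) → z ∈ C

/-- The countable concatenation hull `C^cc` of `C`. -/
def ccHull (μ : Measure Ω) (C : Set (Ω →ₘ[μ] ℝ)) : Set (Ω →ₘ[μ] ℝ) :=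
  {z | ∃ (A : ℕ → Set Ω) (x : ℕ → Ω →ₘ[μ] ℝ),
    (∀ n, MeasurableSet (A n)) ∧ Pairwise (Function.onFun Disjoint A) ∧
    (⋃ n, A n) = Set.univ ∧ (∀ n, x n ∈ C) ∧
    ∀ n, ∀ᵐ ω ∂μ, ω ∈ A n → z ω = x n ω}

/-- `C 1_A = L⁰ 1_A`: every `x ∈ L⁰` agrees a.e. on `A` with some element of `C`. -/
def FullOn (μ : Measure Ω) (C : Set (Ω →ₘ[μ] ℝ)) (A : Set Ω) : Prop :=
  ∀ x : Ω →ₘ[μ] ℝ, ∃ ξ ∈ C, ∀ᵐ ω ∂μ, ω ∈ A → x ω = ξ ω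

/-- `A` is (a version of) the maximal set `A_C` of the class
`{A ∈ 𝒢 ∣ C 1_A = L⁰ 1_A}`; its complement `Aᶜ` is then `D_C`. -/
def IsMaxFull (μ : Measure Ω) (C : Set (Ω →ₘ[μ] ℝ)) (A : Set Ω) : Prop :=
  MeasurableSet A ∧ FullOn μ C A ∧
    ∀ B : Set Ω, MeasurableSet B → FullOn μ C B → μ (B \ A) = 0

/-- `x` is locally separated from `C` on `H`: for every `B ⊆ H` with `μ B > 0`
there is no `ξ ∈ C` with `x = ξ` a.e. on `B`.  With `H = D_C` this is the paper's
notion of `x` being outside `C`. -/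
def LocOutside (μ : Measure Ω) (C : Set (Ω →ₘ[μ] ℝ)) (x : Ω →ₘ[μ] ℝ) (H : Set Ω) : Prop :=
  ∀ B : Set Ω, MeasurableSet B → B ⊆ H → 0 < μ B →
    ¬ ∃ ξ ∈ C, ∀ᵐ ω ∂μ, ω ∈ B → x ω = ξ ω

/-- `H` is (a version of) the largest measurable set `H_{C,x}` on which `x` is locally
separated from `C`. -/
def IsMaxLocOutside (μ : Measure Ω) (C : Set (Ω →ₘ[μ] ℝ)) (x : Ω →ₘ[μ] ℝ) (H : Set Ω) : Prop :=
  MeasurableSet H ∧ LocOutside μ C x H ∧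
    ∀ B : Set Ω, MeasurableSet B → LocOutside μ C x B → μ (B \ H) = 0

/-- `C ⊆ L⁰` is conditionally evenly convex: there are a family `L ⊆ L⁰` and
`Y_{x'} ∈ L⁰` for each `x' ∈ L` with
`C = ⋂_{x' ∈ L} {x ∣ x·x' < Y_{x'} a.e. on D_C}` (where `D_C = Aᶜ` for the maximal
full set `A = A_C`; the case `L = ∅` gives `C = L⁰`). -/
def CondEvenlyConvex (μ : Measure Ω) (C : Set (Ω →ₘ[μ] ℝ)) : Prop :=
  ∃ A : Set Ω, IsMaxFull μ C A ∧
    ∃ (L : Set (Ω →ₘ[μ] ℝ)) (Y : (Ω →ₘ[μ] ℝ) → Ω →ₘ[μ] ℝ),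
      C = ⋂ x' ∈ L, {x : Ω →ₘ[μ] ℝ | ∀ᵐ ω ∂μ, ω ∈ Aᶜ → x ω * x' ω < Y x' ω}

/-- The polar `C°` of `C` (relative to `D = D_C`). -/
def polarSet (μ : Measure Ω) (C : Set (Ω →ₘ[μ] ℝ)) (D : Set Ω) : Set (Ω →ₘ[μ] ℝ) :=
  {x' | ∀ x ∈ C, ∀ᵐ ω ∂μ, ω ∈ D → x ω * x' ω < 1}

/-- The bipolar `C°°` of `C` (relative to `D = D_C`). -/
def bipolarSet (μ : Measure Ω) (C : Set (Ω →ₘ[μ] ℝ)) (D : Set Ω) : Set (Ω →ₘ[μ] ℝ) :=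
  {x | ∀ x' ∈ polarSet μ C D, ∀ᵐ ω ∂μ, ω ∈ D → x ω * x' ω < 1}


open Set ENNReal in
/-- placeholder -/
lemma _dummy_open : True := trivial

open Set ENNReal

/-- Glue countably many AEEqFun's along a measurable partition. -/
lemma glue_exists (μ : Measure Ω) (A : ℕ → Set Ω) (hA : ∀ n, MeasurableSet (A n))
    (hdisj : Pairwise (Function.onFun Disjoint A)) (hcov : (⋃ n, A n) = Set.univ)
    (g : ℕ → Ω →ₘ[μ] ℝ) :
    ∃ z : Ω →ₘ[μ] ℝ, ∀ n, ∀ᵐ ω ∂μ, ω ∈ A n → z ω = g n ω := by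
  classical
  have hex : ∀ ω, ∃ n, ω ∈ A n := by
    intro ω
    have : ω ∈ ⋃ n, A n := hcov ▸ mem_univ ω
    exact mem_iUnion.1 this
  have hmeas : Measurable fun ω => (g (Nat.find (hex ω)) : Ω → ℝ) ω :=
    Measurable.find (p := fun n ω => ω ∈ A n) (fun n => (g n).measurable) (fun n => hA n) hex
  refine ⟨AEEqFun.mk _ hmeas.aestronglyMeasurable, fun n => ?_⟩
  filter_upwards [AEEqFun.coeFn_mk _ hmeas.aestronglyMeasurable] with ω hω hn
  rw [hω]
  have : Nat.find (hex ω) = n := by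
    by_contra hne
    exact (hdisj hne).le_bot ⟨Nat.find_spec (hex ω), hn⟩
  rw [this]

/-- Existence of a maximal measurable set for a σ-union-stable property. -/
lemma exists_max_set (μ : Measure Ω) [IsFiniteMeasure μ] (p : Set Ω → Prop)
    (hex : ∃ B, MeasurableSet B ∧ p B)
    (hU : ∀ B : ℕ → Set Ω, (∀ n, MeasurableSet (B n)) → (∀ n, p (B n)) → p (⋃ n, B n)) :
    ∃ A, MeasurableSet A ∧ p A ∧ ∀ B, MeasurableSet B → p B → μ (B \ A) = 0 := by
  classical
  set S : Set ENNReal := {r | ∃ B, MeasurableSet B ∧ p B ∧ μ B = r} with hS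
  obtain ⟨B₀, hB₀m, hB₀p⟩ := hex
  have hSne : S.Nonempty := ⟨μ B₀, B₀, hB₀m, hB₀p, rfl⟩
  set s := sSup S with hs
  have hsfin : s ≠ ∞ := by
    refine ne_top_of_le_ne_top ((measure_lt_top μ univ).ne) (sSup_le ?_)
    rintro r ⟨B, -, -, rfl⟩
    exact measure_mono (subset_univ B)
  have key : ∀ n : ℕ, ∃ B, MeasurableSet B ∧ p B ∧ s ≤ μ B + 1 / (n + 1) := by
    intro n
    rcases eq_or_ne s 0 with h0 | h0
    · exact ⟨B₀, hB₀m, hB₀p, by simp [h0]⟩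
    · have hlt : s - 1 / (n + 1) < s := by
        apply ENNReal.sub_lt_self hsfin h0
        simp
      obtain ⟨r, hrS, hr⟩ := lt_sSup_iff.1 hlt
      obtain ⟨B, hBm, hBp, rfl⟩ := hrS
      refine ⟨B, hBm, hBp, ?_⟩
      calc s ≤ (s - 1 / (n + 1)) + 1 / (n + 1) := le_tsub_add
        _ ≤ μ B + 1 / (n + 1) := add_le_add_left hr.le _
  choose B hBm hBp hBs using key
  refine ⟨⋃ n, B n, MeasurableSet.iUnion hBm, hU B hBm hBp, ?_⟩
  have hAs : μ (⋃ n, B n) ≤ s := le_sSup ⟨_, MeasurableSet.iUnion hBm, hU B hBm hBp, rfl⟩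
  have hA : s ≤ μ (⋃ n, B n) := by
    refine ENNReal.le_of_forall_pos_le_add fun ε hε _ => ?_
    obtain ⟨n, hn⟩ := ENNReal.exists_inv_nat_lt (a := (ε : ENNReal)) (by exact_mod_cast hε.ne')
    calc s ≤ μ (B n) + 1 / (n + 1) := hBs n
      _ ≤ μ (⋃ n, B n) + 1 / (n + 1) := add_le_add_left (measure_mono (subset_iUnion B n)) _
      _ ≤ μ (⋃ n, B n) + ε := by
          refine add_le_add_right (le_of_lt ?_) _
          refine lt_of_le_of_lt ?_ hn
          rw [one_div]
          exact ENNReal.inv_le_inv.2 (by exact_mod_cast Nat.le_succ n)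
  intro D hDm hDp
  have hup : p ((⋃ n, B n) ∪ D) := by
    have := hU (fun k => if k = 0 then (⋃ n, B n) else D)
      (fun k => by by_cases h : k = 0 <;> simp [h, MeasurableSet.iUnion hBm, hDm])
      (fun k => by by_cases h : k = 0 <;> simp [h, hU B hBm hBp, hDp])
    have e : (⋃ k, if k = 0 then (⋃ n, B n) else D) = (⋃ n, B n) ∪ D := by
      apply Set.Subset.antisymm
      · refine Set.iUnion_subset fun k => ?_
        by_cases h : k = 0 <;> simp [h]
      · rintro x (hx | hx)
        · exact Set.mem_iUnion.2 ⟨0, by simpa using hx⟩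
        · exact Set.mem_iUnion.2 ⟨1, by simpa using hx⟩
    rw [← e]
    exact this
  have hle : μ ((⋃ n, B n) ∪ D) ≤ s :=
    le_sSup ⟨_, (MeasurableSet.iUnion hBm).union hDm, hup, rfl⟩
  have hdecomp : μ ((⋃ n, B n) ∪ D) = μ (⋃ n, B n) + μ (D \ ⋃ n, B n) := by
    rw [← measure_union (disjoint_sdiff_right) (hDm.diff (MeasurableSet.iUnion hBm))]
    congr 1
    rw [Set.union_diff_self]
  have : μ (⋃ n, B n) + μ (D \ ⋃ n, B n) ≤ μ (⋃ n, B n) + 0 := by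
    rw [add_zero]
    exact hdecomp ▸ hle.trans hA
  have := (ENNReal.add_le_add_iff_left (measure_lt_top μ _).ne).1 this
  exact le_antisymm this zero_le


section Helpers

variable {μ : Measure Ω} {C : Set (Ω →ₘ[μ] ℝ)}

/-- Raw binary gluing of two AEEqFuns along a measurable set. -/
lemma glue2_raw (μ : Measure Ω) (B : Set Ω) (hB : MeasurableSet B) (x y : Ω →ₘ[μ] ℝ) :
    ∃ w : Ω →ₘ[μ] ℝ, (∀ᵐ ω ∂μ, ω ∈ B → w ω = x ω) ∧ (∀ᵐ ω ∂μ, ω ∉ B → w ω = y ω) := by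
  classical
  have hm : Measurable (B.piecewise ⇑x ⇑y) :=
    Measurable.piecewise hB x.measurable y.measurable
  refine ⟨AEEqFun.mk _ hm.aestronglyMeasurable, ?_, ?_⟩ <;>
    filter_upwards [AEEqFun.coeFn_mk _ hm.aestronglyMeasurable] with ω hω h
  · rw [hω, Set.piecewise_eq_of_mem _ _ _ h]
  · rw [hω, Set.piecewise_eq_of_notMem _ _ _ h]

/-- The partition (B, Bᶜ, ∅, ∅, ...) used for binary concatenation. -/
lemma glue2_mem (hcc : CSet μ C) (B : Set Ω) (hB : MeasurableSet B)
    {x y : Ω →ₘ[μ] ℝ} (hx : x ∈ C) (hy : y ∈ C) :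
    ∃ w ∈ C, (∀ᵐ ω ∂μ, ω ∈ B → w ω = x ω) ∧ (∀ᵐ ω ∂μ, ω ∉ B → w ω = y ω) := by
  classical
  set A : ℕ → Set Ω := fun n => if n = 0 then B else if n = 1 then Bᶜ else ∅ with hA
  have hAm : ∀ n, MeasurableSet (A n) := by
    intro n
    simp only [hA]
    split
    · exact hB
    · split
      · exact hB.compl
      · exact MeasurableSet.empty
  have hAd : Pairwise (Function.onFun Disjoint A) := by
    intro i j hij
    unfold Function.onFun
    rcases i with _ | _ | i <;> rcases j with _ | _ | j <;>
      simp only [hA, if_pos, if_neg, reduceIte] <;>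
      first
        | exact absurd rfl hij
        | exact disjoint_compl_right
        | exact disjoint_compl_left
        | exact Set.disjoint_empty _
        | exact Set.empty_disjoint _
  have hAc : (⋃ n, A n) = Set.univ := by
    apply Set.eq_univ_of_forall
    intro ω
    by_cases h : ω ∈ B
    · exact Set.mem_iUnion.2 ⟨0, by simp [hA, h]⟩
    · exact Set.mem_iUnion.2 ⟨1, by simp [hA, h]⟩
  set g : ℕ → Ω →ₘ[μ] ℝ := fun n => if n = 0 then x else y with hg
  obtain ⟨w, hw⟩ := glue_exists μ A hAm hAd hAc g
  have hgC : ∀ n, g n ∈ C := by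
    intro n
    simp only [hg]
    split <;> [exact hx; exact hy]
  refine ⟨w, hcc A hAm hAd hAc g hgC w hw, ?_, ?_⟩
  · have := hw 0
    simpa [hA, hg] using this
  · have := hw 1
    simpa [hA, hg] using this

lemma exists_isMaxFull [IsProbabilityMeasure μ] (hne : C.Nonempty) (hcc : CSet μ C) :
    ∃ A, IsMaxFull μ C A := by
  classical
  obtain ⟨ξ₀, hξ₀⟩ := hne
  have hex : ∃ B, MeasurableSet B ∧ FullOn μ C B := by
    refine ⟨∅, MeasurableSet.empty, fun x => ⟨ξ₀, hξ₀, ?_⟩⟩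
    filter_upwards with ω h
    exact absurd h (Set.notMem_empty ω)
  have hU : ∀ B : ℕ → Set Ω, (∀ n, MeasurableSet (B n)) → (∀ n, FullOn μ C (B n)) →
      FullOn μ C (⋃ n, B n) := by
    intro B hBm hBf x
    choose ξ hξC hξ using fun n => hBf n x
    set P : ℕ → Set Ω := fun k => Nat.casesOn k (⋃ n, B n)ᶜ (fun n => disjointed B n) with hP
    have hPm : ∀ k, MeasurableSet (P k) := by
      rintro (_ | k)
      · exact (MeasurableSet.iUnion hBm).compl
      · exact MeasurableSet.disjointed hBm k
    have hPd : Pairwise (Function.onFun Disjoint P) := by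
      rintro (_ | i) (_ | j) hij <;> unfold Function.onFun
      · exact absurd rfl hij
      · exact Set.disjoint_left.2 fun ω hω hω' =>
          hω (Set.mem_iUnion.2 ⟨j, disjointed_subset B j hω'⟩)
      · exact (Set.disjoint_left.2 fun ω hω hω' =>
          hω' (Set.mem_iUnion.2 ⟨i, disjointed_subset B i hω⟩))
      · exact disjoint_disjointed B (by omega : i ≠ j)
    have hPc : (⋃ k, P k) = Set.univ := by
      apply Set.eq_univ_of_forall
      intro ω
      by_cases h : ω ∈ ⋃ n, B n
      · rw [← iUnion_disjointed] at h
        obtain ⟨n, hn⟩ := Set.mem_iUnion.1 h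
        exact Set.mem_iUnion.2 ⟨n + 1, hn⟩
      · exact Set.mem_iUnion.2 ⟨0, h⟩
    set g : ℕ → Ω →ₘ[μ] ℝ := fun k => Nat.casesOn k ξ₀ ξ with hg
    obtain ⟨z, hz⟩ := glue_exists μ P hPm hPd hPc g
    have hzC : z ∈ C := by
      refine hcc P hPm hPd hPc g (fun k => ?_) z hz
      rcases k with _ | k
      · exact hξ₀
      · exact hξC k
    refine ⟨z, hzC, ?_⟩
    have h1 : ∀ᵐ ω ∂μ, ∀ n, ω ∈ P (n + 1) → z ω = g (n + 1) ω :=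
      MeasureTheory.ae_all_iff.2 fun n => hz (n + 1)
    have h2 : ∀ᵐ ω ∂μ, ∀ n, ω ∈ B n → x ω = ξ n ω := MeasureTheory.ae_all_iff.2 hξ
    filter_upwards [h1, h2] with ω hω1 hω2 hmem
    rw [← iUnion_disjointed] at hmem
    obtain ⟨n, hn⟩ := Set.mem_iUnion.1 hmem
    rw [hω2 n (disjointed_subset B n hn), ← hω1 n hn]
  obtain ⟨A, hAm, hAf, hAmax⟩ := exists_max_set μ (FullOn μ C) hex hU
  exact ⟨A, hAm, hAf, hAmax⟩

lemma exists_isMaxLocOutside [IsProbabilityMeasure μ] (z : Ω →ₘ[μ] ℝ) :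
    ∃ H, IsMaxLocOutside μ C z H := by
  have hex : ∃ B, MeasurableSet B ∧ LocOutside μ C z B :=
    ⟨∅, MeasurableSet.empty, fun B _ hB hpos _ => by
      simp [Set.subset_empty_iff.1 hB] at hpos⟩
  have hU : ∀ B : ℕ → Set Ω, (∀ n, MeasurableSet (B n)) → (∀ n, LocOutside μ C z (B n)) →
      LocOutside μ C z (⋃ n, B n) := by
    intro B hBm hBl D hDm hDsub hDpos ⟨ξ, hξC, hξ⟩
    have : ∃ n, 0 < μ (D ∩ B n) := by
      by_contra h
      push_neg at h
      simp only [le_zero_iff] at h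
      have : μ D ≤ ∑' n, μ (D ∩ B n) := by
        calc μ D = μ (⋃ n, D ∩ B n) := by rw [← Set.inter_iUnion, Set.inter_eq_self_of_subset_left hDsub]
          _ ≤ ∑' n, μ (D ∩ B n) := measure_iUnion_le _
      simp [h] at this
      exact absurd this hDpos.ne'
    obtain ⟨n, hn⟩ := this
    exact hBl n (D ∩ B n) (hDm.inter (hBm n)) Set.inter_subset_right hn
      ⟨ξ, hξC, hξ.mono fun ω h hω => h hω.1⟩
  obtain ⟨H, hHm, hHl, hHmax⟩ := exists_max_set μ (LocOutside μ C z) hex hU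
  exact ⟨H, hHm, hHl, hHmax⟩

lemma measure_pos_of_maxLocOutside [IsProbabilityMeasure μ] (hne : C.Nonempty)
    (hcc : CSet μ C) {z : Ω →ₘ[μ] ℝ} (hz : z ∉ C) {H : Set Ω}
    (hH : IsMaxLocOutside μ C z H) : 0 < μ H := by
  classical
  obtain ⟨ξ₀, hξ₀⟩ := hne
  -- matchable sets
  set p : Set Ω → Prop := fun M => ∃ ξ ∈ C, ∀ᵐ ω ∂μ, ω ∈ M → z ω = ξ ω with hp
  have hex : ∃ B, MeasurableSet B ∧ p B := by
    refine ⟨∅, MeasurableSet.empty, ξ₀, hξ₀, ?_⟩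
    filter_upwards with ω h
    exact absurd h (Set.notMem_empty ω)
  have hU : ∀ B : ℕ → Set Ω, (∀ n, MeasurableSet (B n)) → (∀ n, p (B n)) → p (⋃ n, B n) := by
    intro B hBm hBp
    choose ξ hξC hξ using hBp
    set P : ℕ → Set Ω := fun k => Nat.casesOn k (⋃ n, B n)ᶜ (fun n => disjointed B n) with hP
    have hPm : ∀ k, MeasurableSet (P k) := by
      rintro (_ | k)
      · exact (MeasurableSet.iUnion hBm).compl
      · exact MeasurableSet.disjointed hBm k
    have hPd : Pairwise (Function.onFun Disjoint P) := by
      rintro (_ | i) (_ | j) hij <;> unfold Function.onFun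
      · exact absurd rfl hij
      · exact Set.disjoint_left.2 fun ω hω hω' =>
          hω (Set.mem_iUnion.2 ⟨j, disjointed_subset B j hω'⟩)
      · exact (Set.disjoint_left.2 fun ω hω hω' =>
          hω' (Set.mem_iUnion.2 ⟨i, disjointed_subset B i hω⟩))
      · exact disjoint_disjointed B (by omega : i ≠ j)
    have hPc : (⋃ k, P k) = Set.univ := by
      apply Set.eq_univ_of_forall
      intro ω
      by_cases h : ω ∈ ⋃ n, B n
      · rw [← iUnion_disjointed] at h
        obtain ⟨n, hn⟩ := Set.mem_iUnion.1 h
        exact Set.mem_iUnion.2 ⟨n + 1, hn⟩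
      · exact Set.mem_iUnion.2 ⟨0, h⟩
    set g : ℕ → Ω →ₘ[μ] ℝ := fun k => Nat.casesOn k ξ₀ ξ with hg
    obtain ⟨w, hw⟩ := glue_exists μ P hPm hPd hPc g
    have hwC : w ∈ C := by
      refine hcc P hPm hPd hPc g (fun k => ?_) w hw
      rcases k with _ | k
      · exact hξ₀
      · exact hξC k
    refine ⟨w, hwC, ?_⟩
    have h1 : ∀ᵐ ω ∂μ, ∀ n, ω ∈ P (n + 1) → w ω = g (n + 1) ω :=
      MeasureTheory.ae_all_iff.2 fun n => hw (n + 1)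
    have h2 : ∀ᵐ ω ∂μ, ∀ n, ω ∈ B n → z ω = ξ n ω := MeasureTheory.ae_all_iff.2 hξ
    filter_upwards [h1, h2] with ω hω1 hω2 hmem
    rw [← iUnion_disjointed] at hmem
    obtain ⟨n, hn⟩ := Set.mem_iUnion.1 hmem
    rw [hω2 n (disjointed_subset B n hn), ← hω1 n hn]
  obtain ⟨M, hMm, hMp, hMmax⟩ := exists_max_set μ p hex hU
  obtain ⟨ξM, hξMC, hξM⟩ := hMp
  -- Mᶜ is locally outside
  have hMc : LocOutside μ C z Mᶜ := by
    intro B hBm hBsub hBpos ⟨ξ, hξC, hξ⟩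
    obtain ⟨w, hwC, hw1, hw2⟩ := glue2_mem hcc M hMm hξMC hξC
    have : p (M ∪ B) := by
      refine ⟨w, hwC, ?_⟩
      filter_upwards [hξM, hξ, hw1, hw2] with ω h1 h2 h3 h4 hmem
      rcases hmem with hm | hb
      · rw [h1 hm, ← h3 hm]
      · have hnm : ω ∉ M := fun hm => (hBsub hb) hm
        rw [h2 hb, ← h4 hnm]
    have := hMmax (M ∪ B) (hMm.union hBm) this
    rw [Set.union_diff_left] at this
    have hBM : B \ M = B := by
      ext ω
      exact ⟨fun h => h.1, fun h => ⟨h, fun hm => (hBsub h) hm⟩⟩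
    rw [hBM] at this
    exact absurd this hBpos.ne'
  have hMcH := hH.2.2 Mᶜ hMm.compl hMc
  rcases eq_or_lt_of_le (zero_le : 0 ≤ μ H) with h0 | h
  · exfalso
    have hMc0 : μ Mᶜ = 0 := by
      have : μ Mᶜ ≤ μ (Mᶜ \ H) + μ H := by
        calc μ Mᶜ ≤ μ ((Mᶜ \ H) ∪ H) := measure_mono fun ω hω => by
              by_cases hh : ω ∈ H
              · exact Or.inr hh
              · exact Or.inl ⟨hω, hh⟩
          _ ≤ μ (Mᶜ \ H) + μ H := measure_union_le _ _
      simpa [hMcH, ← h0] using this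
    have hae : ∀ᵐ ω ∂μ, ω ∈ M := by
      have := measure_eq_zero_iff_ae_notMem.1 hMc0
      filter_upwards [this] with ω hω
      by_contra h
      exact hω h
    have : z =ᵐ[μ] ξM := by
      filter_upwards [hae, hξM] with ω h1 h2
      exact h2 h1
    exact hz (AEEqFun.ext this ▸ hξMC)
  · exact h

lemma maxFull_inter_locOutside {z : Ω →ₘ[μ] ℝ} {A H : Set Ω} (hA : IsMaxFull μ C A)
    (hHm : MeasurableSet H) (hHl : LocOutside μ C z H) : μ (H ∩ A) = 0 := by
  by_contra h
  have hpos : 0 < μ (H ∩ A) := pos_iff_ne_zero.2 h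
  obtain ⟨ξ, hξC, hξ⟩ := hA.2.1 z
  exact hHl (H ∩ A) (hHm.inter hA.1) Set.inter_subset_left hpos
    ⟨ξ, hξC, hξ.mono fun ω hω hmem => hω hmem.2⟩

end Helpers

/-- **Proposition (separation on `H_{C,x}`).**  Let `C ⊆ L⁰` be nonempty and
satisfy the countable concatenation property.  The following are equivalent:
(1) `C` is conditionally evenly convex; (2) for every `x ∉ C` there exists
`x' ∈ L⁰` such that `ξ·x' < x·x'` a.e. on `H_{C,x}` for all `ξ ∈ C`, where
`H_{C,x}` is the largest measurable set on which `x` is locally separated from `C`. -/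
theorem stmt4 (μ : Measure Ω) [IsProbabilityMeasure μ]
    (C : Set (Ω →ₘ[μ] ℝ)) (hne : C.Nonempty) (hcc : CSet μ C) :
    CondEvenlyConvex μ C ↔
      ∀ x : Ω →ₘ[μ] ℝ, x ∉ C → ∀ H : Set Ω, IsMaxLocOutside μ C x H →
        ∃ x' : Ω →ₘ[μ] ℝ, ∀ ξ ∈ C,
          ∀ᵐ ω ∂μ, ω ∈ H → ξ ω * x' ω < x ω * x' ω := by
  classical
  constructor
  · -- (1) ⇒ (2)
    rintro ⟨A, hAfull, L0, Y0, hCeq⟩ z hz H hH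
    rcases Set.eq_empty_or_nonempty L0 with hL0 | ⟨v₀, hv₀⟩
    · exfalso
      apply hz
      rw [hCeq, hL0]
      simp
    have hmemC : ∀ ξ ∈ C, ∀ v ∈ L0, ∀ᵐ ω ∂μ, ω ∈ Aᶜ → ξ ω * v ω < Y0 v ω := by
      intro ξ hξ v hv
      have hξ2 := hξ
      rw [hCeq] at hξ2
      exact Set.mem_iInter₂.1 hξ2 v hv
    set F : (Ω →ₘ[μ] ℝ) → Set Ω := fun v => Aᶜ ∩ {ω | Y0 v ω ≤ z ω * v ω} with hF
    have hFm : ∀ v, MeasurableSet (F v) := fun v =>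
      hAfull.1.compl.inter (measurableSet_le (Y0 v).measurable (z.measurable.mul v.measurable))
    set p : Set Ω → Prop := fun B =>
      ∃ v : ℕ → Ω →ₘ[μ] ℝ, (∀ n, v n ∈ L0) ∧ B = ⋃ n, F (v n) with hp
    have hex : ∃ B, MeasurableSet B ∧ p B :=
      ⟨⋃ _ : ℕ, F v₀, MeasurableSet.iUnion fun _ => hFm v₀, fun _ => v₀, fun _ => hv₀, rfl⟩
    have hU : ∀ B : ℕ → Set Ω, (∀ n, MeasurableSet (B n)) → (∀ n, p (B n)) → p (⋃ n, B n) := by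
      intro B hBm hBp
      choose v hvL hvE using hBp
      refine ⟨fun k : ℕ => v k.unpair.1 k.unpair.2, fun k => hvL _ _, ?_⟩
      calc ⋃ n, B n = ⋃ i, ⋃ j, F (v i j) := Set.iUnion_congr fun n => hvE n
        _ = ⋃ k : ℕ, F (v k.unpair.1 k.unpair.2) := (Set.iUnion_unpair fun i j => F (v i j)).symm
    obtain ⟨G, hGm, hGp, hGmax⟩ := exists_max_set μ p hex hU
    have hFsub : ∀ v ∈ L0, μ (F v \ G) = 0 := by
      intro v hv
      obtain ⟨vG, hvGL, hGeq⟩ := hGp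
      have hpu : p (G ∪ F v) := by
        refine ⟨fun k => Nat.casesOn k v vG, fun k => by rcases k with _ | k; exacts [hv, hvGL k], ?_⟩
        rw [hGeq]
        apply Set.Subset.antisymm
        · rintro ω (hω | hω)
          · obtain ⟨n, hn⟩ := Set.mem_iUnion.1 hω
            exact Set.mem_iUnion.2 ⟨n + 1, hn⟩
          · exact Set.mem_iUnion.2 ⟨0, hω⟩
        · rintro ω hω
          obtain ⟨k, hk⟩ := Set.mem_iUnion.1 hω
          rcases k with _ | k
          · exact Or.inr hk
          · exact Or.inl (Set.mem_iUnion.2 ⟨k, hk⟩)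
      have := hGmax (G ∪ F v) (hGm.union (hFm v)) hpu
      rwa [Set.union_diff_left] at this
    have hHG : μ (H \ G) = 0 := by
      by_contra hpos0
      have hpos : 0 < μ (H \ G) := pos_iff_ne_zero.2 hpos0
      obtain ⟨ξ₀, hξ₀⟩ := hne
      obtain ⟨w, hw1, hw2⟩ := glue2_raw μ (H \ G) (hH.1.diff hGm) z ξ₀
      have hwC : w ∈ C := by
        rw [hCeq]
        refine Set.mem_iInter₂.2 fun v hv => ?_
        have hFv : ∀ᵐ ω ∂μ, ω ∉ F v \ G := measure_eq_zero_iff_ae_notMem.1 (hFsub v hv)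
        filter_upwards [hw1, hw2, hFv, hmemC ξ₀ hξ₀ v hv] with ω h1 h2 h3 h4 hAmem
        by_cases hmem : ω ∈ H \ G
        · rw [h1 hmem]
          have hnF : ω ∉ F v := fun hf => h3 ⟨hf, hmem.2⟩
          have : ¬ (Y0 v ω ≤ z ω * v ω) := fun hle => hnF ⟨hAmem, hle⟩
          exact lt_of_not_ge this
        · rw [h2 hmem]
          exact h4 hAmem
      exact hH.2.1 (H \ G) (hH.1.diff hGm) Set.diff_subset hpos
        ⟨w, hwC, hw1.mono fun ω h hm => (h hm).symm⟩
    obtain ⟨vG, hvGL, hGeq⟩ := hGp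
    set E : ℕ → Set Ω := disjointed (fun n => F (vG n)) with hE
    have hEm : ∀ n, MeasurableSet (E n) :=
      fun n => MeasurableSet.disjointed (fun n => hFm (vG n)) n
    set P : ℕ → Set Ω := fun k => Nat.casesOn k (⋃ n, E n)ᶜ E with hP
    have hPm : ∀ k, MeasurableSet (P k) := by
      rintro (_ | k)
      · exact (MeasurableSet.iUnion hEm).compl
      · exact hEm k
    have hPd : Pairwise (Function.onFun Disjoint P) := by
      rintro (_ | i) (_ | j) hij <;> unfold Function.onFun
      · exact absurd rfl hij
      · exact Set.disjoint_left.2 fun ω hω hω' => hω (Set.mem_iUnion.2 ⟨j, hω'⟩)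
      · exact Set.disjoint_left.2 fun ω hω hω' => hω' (Set.mem_iUnion.2 ⟨i, hω⟩)
      · exact disjoint_disjointed _ (by omega : i ≠ j)
    have hPc : (⋃ k, P k) = Set.univ := by
      apply Set.eq_univ_of_forall
      intro ω
      by_cases h : ω ∈ ⋃ n, E n
      · obtain ⟨n, hn⟩ := Set.mem_iUnion.1 h
        exact Set.mem_iUnion.2 ⟨n + 1, hn⟩
      · exact Set.mem_iUnion.2 ⟨0, h⟩
    obtain ⟨x', hx'⟩ := glue_exists μ P hPm hPd hPc (fun k => Nat.casesOn k 0 vG)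
    refine ⟨x', fun ξ hξ => ?_⟩
    have h1 : ∀ᵐ ω ∂μ, ∀ n, ω ∈ P (n + 1) → x' ω = vG n ω :=
      MeasureTheory.ae_all_iff.2 fun n => hx' (n + 1)
    have h2 : ∀ᵐ ω ∂μ, ∀ n, ω ∈ Aᶜ → ξ ω * vG n ω < Y0 (vG n) ω :=
      MeasureTheory.ae_all_iff.2 fun n => hmemC ξ hξ (vG n) (hvGL n)
    have h3 : ∀ᵐ ω ∂μ, ω ∈ H → ω ∈ G := by
      filter_upwards [measure_eq_zero_iff_ae_notMem.1 hHG] with ω hω hHmem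
      by_contra hG
      exact hω ⟨hHmem, hG⟩
    filter_upwards [h1, h2, h3] with ω hω1 hω2 hω3 hmem
    have hG' : ω ∈ ⋃ n, E n := by
      rw [hE, iUnion_disjointed, ← hGeq]
      exact hω3 hmem
    obtain ⟨n, hn⟩ := Set.mem_iUnion.1 hG'
    have hx'eq := hω1 n hn
    have hFmem : ω ∈ F (vG n) := disjointed_subset _ n hn
    rw [hx'eq]
    have hlt : ξ ω * vG n ω < Y0 (vG n) ω := hω2 n hFmem.1
    have hge : Y0 (vG n) ω ≤ z ω * vG n ω := hFmem.2
    linarith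
  · -- (2) ⇒ (1)
    intro hsep
    obtain ⟨A, hAfull⟩ := exists_isMaxFull hne hcc
    refine ⟨A, hAfull, ?_⟩
    set P2 : (Ω →ₘ[μ] ℝ) → ℝ → Set Ω → Prop :=
      fun u c B => ∀ ξ ∈ C, ∀ᵐ ω ∂μ, ω ∈ B → ξ ω * u ω < c with hP2
    have hP2ex : ∀ u c, ∃ B, MeasurableSet B ∧ P2 u c B := fun u c =>
      ⟨∅, MeasurableSet.empty, fun ξ _ => by
        filter_upwards with ω h
        exact absurd h (Set.notMem_empty ω)⟩
    have hP2U : ∀ u c, ∀ B : ℕ → Set Ω, (∀ n, MeasurableSet (B n)) → (∀ n, P2 u c (B n)) →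
        P2 u c (⋃ n, B n) := by
      intro u c B hBm hBp ξ hξ
      filter_upwards [MeasureTheory.ae_all_iff.2 fun n => hBp n ξ hξ] with ω hω hmem
      obtain ⟨n, hn⟩ := Set.mem_iUnion.1 hmem
      exact hω n hn
    choose Bneg hBnegm hBnegp hBnegmax using
      fun u => exists_max_set μ (P2 u (-1)) (hP2ex u (-1)) (hP2U u (-1))
    choose Bzero hBzerom hBzerop hBzeromax using
      fun u => exists_max_set μ (P2 u 0) (hP2ex u 0) (hP2U u 0)
    set yf : (Ω →ₘ[μ] ℝ) → Ω → ℝ :=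
      fun u ω => if ω ∈ Bneg u then (-1 : ℝ) else if ω ∈ Bzero u then 0 else 1 with hyf
    have hyfm : ∀ u, Measurable (yf u) := fun u =>
      Measurable.ite (hBnegm u) measurable_const
        (Measurable.ite (hBzerom u) measurable_const measurable_const)
    set Y : (Ω →ₘ[μ] ℝ) → Ω →ₘ[μ] ℝ :=
      fun u => AEEqFun.mk (yf u) (hyfm u).aestronglyMeasurable with hY
    have hYae : ∀ u, ∀ᵐ ω ∂μ, Y u ω = yf u ω := fun u =>
      AEEqFun.coeFn_mk (yf u) (hyfm u).aestronglyMeasurable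
    set L : Set (Ω →ₘ[μ] ℝ) := {u | ∃ z H, z ∉ C ∧ MeasurableSet H ∧
      (∀ᵐ ω ∂μ, ω ∉ H → u ω = 0) ∧
      (∀ᵐ ω ∂μ, ω ∈ H → z ω * u ω = 1 ∨ z ω * u ω = 0 ∨ z ω * u ω = -1) ∧
      (∀ ξ ∈ C, ∀ᵐ ω ∂μ, ω ∈ H → ξ ω * u ω < z ω * u ω)} with hL
    refine ⟨L, Y, Set.Subset.antisymm ?_ ?_⟩
    · intro ξ hξ
      refine Set.mem_iInter₂.2 fun u hu => ?_
      obtain ⟨z, H, hzC, hHm, hu0, hupat, husep⟩ := hu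
      filter_upwards [hYae u, hBnegp u ξ hξ, hBzerop u ξ hξ, hu0, hupat, husep ξ hξ] with
        ω hYeq hbn hbz h0 hpat hsep' hAmem
      rw [hYeq]
      simp only [hyf]
      by_cases hb : ω ∈ Bneg u
      · rw [if_pos hb]
        exact hbn hb
      · rw [if_neg hb]
        by_cases hz0 : ω ∈ Bzero u
        · rw [if_pos hz0]
          exact hbz hz0
        · rw [if_neg hz0]
          by_cases hmem : ω ∈ H
          · have := hsep' hmem
            rcases hpat hmem with h | h | h <;> linarith
          · rw [h0 hmem, mul_zero]
            norm_num
    · intro z hzmem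
      by_contra hz
      obtain ⟨H, hH⟩ := exists_isMaxLocOutside (C := C) z
      obtain ⟨w, hw⟩ := hsep z hz H hH
      have hHpos := measure_pos_of_maxLocOutside hne hcc hz hH
      have hHA : μ (H ∩ A) = 0 := maxFull_inter_locOutside hAfull hH.1 hH.2.1
      set m : Ω → ℝ := fun ω => if z ω * w ω = 0 then 1 else |z ω * w ω| with hm
      have hmm : Measurable m :=
        Measurable.ite (measurableSet_eq_fun (z.measurable.mul w.measurable) measurable_const)
          measurable_const (z.measurable.mul w.measurable).abs
      have hmpos : ∀ ω, 0 < m ω := by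
        intro ω
        have he : m ω = if z ω * w ω = 0 then 1 else |z ω * w ω| := rfl
        rw [he]
        split_ifs with h
        · norm_num
        · exact abs_pos.2 h
      set f : Ω → ℝ := H.indicator (fun ω => w ω / m ω) with hf
      have hfm : Measurable f := (w.measurable.div hmm).indicator hH.1
      set u : Ω →ₘ[μ] ℝ := AEEqFun.mk f hfm.aestronglyMeasurable with hu
      have hufeq : ∀ᵐ ω ∂μ, u ω = f ω := AEEqFun.coeFn_mk _ _
      have hu0 : ∀ᵐ ω ∂μ, ω ∉ H → u ω = 0 := by
        filter_upwards [hufeq] with ω h hm'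
        rw [h, hf]
        exact Set.indicator_of_notMem hm' _
      have hupat : ∀ᵐ ω ∂μ, ω ∈ H → z ω * u ω = 1 ∨ z ω * u ω = 0 ∨ z ω * u ω = -1 := by
        filter_upwards [hufeq] with ω h hmem
        rw [h, hf, Set.indicator_of_mem hmem, ← mul_div_assoc]
        rcases lt_trichotomy (z ω * w ω) 0 with hlt | heq | hgt
        · right; right
          rw [hm]
          simp only [if_neg hlt.ne]
          rw [abs_of_neg hlt, div_neg, div_self hlt.ne]
        · right; left
          rw [heq, zero_div]
        · left
          rw [hm]
          simp only [if_neg hgt.ne']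
          rw [abs_of_pos hgt, div_self hgt.ne']
      have husep : ∀ ξ ∈ C, ∀ᵐ ω ∂μ, ω ∈ H → ξ ω * u ω < z ω * u ω := by
        intro ξ hξ
        filter_upwards [hufeq, hw ξ hξ] with ω h hsep' hmem
        rw [h, hf, Set.indicator_of_mem hmem, ← mul_div_assoc, ← mul_div_assoc,
          div_eq_mul_inv, div_eq_mul_inv]
        exact mul_lt_mul_of_pos_right (hsep' hmem) (inv_pos.2 (hmpos ω))
      have huL : u ∈ L := ⟨z, H, hz, hH.1, hu0, hupat, husep⟩
      set Zneg : Set Ω := H ∩ {ω | z ω * f ω < 0} with hZn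
      set Zzero : Set Ω := H ∩ {ω | z ω * f ω = 0} with hZz
      have hZnm : MeasurableSet Zneg :=
        hH.1.inter (measurableSet_lt (z.measurable.mul hfm) measurable_const)
      have hZzm : MeasurableSet Zzero :=
        hH.1.inter (measurableSet_eq_fun (z.measurable.mul hfm) measurable_const)
      have hZnp : P2 u (-1) Zneg := by
        intro ξ hξ
        filter_upwards [hufeq, husep ξ hξ, hupat] with ω h hs hp hmem
        have hH' : ω ∈ H := hmem.1
        have hlt0 : z ω * u ω < 0 := by
          rw [h]
          exact hmem.2
        have h1 := hs hH'
        rcases hp hH' with e | e | e <;> linarith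
      have hZzp : P2 u 0 (Zneg ∪ Zzero) := by
        intro ξ hξ
        filter_upwards [hufeq, husep ξ hξ, hupat] with ω h hs hp hmem
        rcases hmem with hmem | hmem
        · have h1 := hs hmem.1
          have hlt0 : z ω * u ω < 0 := by
            rw [h]
            exact hmem.2
          linarith
        · have h1 := hs hmem.1
          have heq0 : z ω * u ω = 0 := by
            rw [h]
            exact hmem.2
          linarith
      have hn1 := hBnegmax u Zneg hZnm hZnp
      have hn2 := hBzeromax u (Zneg ∪ Zzero) (hZnm.union hZzm) hZzp
      have hzY : ∀ᵐ ω ∂μ, ω ∈ Aᶜ → z ω * u ω < Y u ω := Set.mem_iInter₂.1 hzmem u huL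
      have hfinal : ∀ᵐ ω ∂μ, ω ∉ H := by
        filter_upwards [hufeq, hupat, hzY, measure_eq_zero_iff_ae_notMem.1 hn1,
          measure_eq_zero_iff_ae_notMem.1 hn2, measure_eq_zero_iff_ae_notMem.1 hHA, hYae u] with
          ω h hp hzy h1 h2 hA3 hYeq
        intro hmem
        have hAc : ω ∈ Aᶜ := fun hA' => hA3 ⟨hmem, hA'⟩
        have hzY' := hzy hAc
        rw [hYeq] at hzY'
        simp only [hyf] at hzY'
        by_cases hb : ω ∈ Bneg u
        · rw [if_pos hb] at hzY'
          rcases hp hmem with e | e | e <;> linarith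
        · rw [if_neg hb] at hzY'
          have hnZ : ω ∉ Zneg := fun hZ => h1 ⟨hZ, hb⟩
          have hge : 0 ≤ z ω * u ω := by
            rcases hp hmem with e | e | e
            · linarith
            · linarith
            · exfalso
              apply hnZ
              refine ⟨hmem, ?_⟩
              show z ω * f ω < 0
              rw [← h]
              linarith
          by_cases hz0 : ω ∈ Bzero u
          · rw [if_pos hz0] at hzY'
            linarith
          · rw [if_neg hz0] at hzY'
            have hnZz : ω ∉ Zzero := fun hZ => h2 ⟨Or.inr hZ, hz0⟩
            have hone : z ω * u ω = 1 := by
              rcases hp hmem with e | e | e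
              · exact e
              · exfalso
                apply hnZz
                refine ⟨hmem, ?_⟩
                show z ω * f ω = 0
                rw [← h]
                exact e
              · linarith
            linarith
      exact absurd (measure_eq_zero_iff_ae_notMem.2 hfinal) hHpos.ne'
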